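/- Let m ∈ ℝ, m ≠ 0, and let f, 𝔣 : Γ₊ → ℝ be symmetric, differentiable, positively homogeneous of degree m, and elliptic on Γ₊ (all first partial derivatives of both f and 𝔣 are positive on Γ₊). If f is convex and 𝔣 is concave on Γ₊, then for every λ ∈ Γ₊: m · Σⱼ ( f(λ) · ∂𝔣/∂λⱼ(λ) − 𝔣(λ) · ∂f/∂λⱼ(λ) ) ≥ 0. -/

import Mathlib

open Filter

private lemma sum_aux {n : ℕ} (L : (Fin n → ℝ) →L[ℝ] ℝ) (v : Fin n → ℝ) :
    L v = ∑ i, v i * L (Pi.single i 1) := by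
  have hv : v = ∑ i, v i • (Pi.single i (1:ℝ) : Fin n → ℝ) := by
    ext k; simp [Finset.sum_apply, Pi.single_apply]
  conv_lhs => rw [hv]
  simp [map_sum, smul_eq_mul]

private lemma euler_aux {n : ℕ} {m : ℝ} {f : (Fin n → ℝ) → ℝ} {Γ : Set (Fin n → ℝ)}
    (hhom : ∀ t : ℝ, 0 < t → ∀ x ∈ Γ, f (t • x) = t ^ m * f x)
    {x : Fin n → ℝ} (hx : x ∈ Γ) (hdf : DifferentiableAt ℝ f x) :
    fderiv ℝ f x x = m * f x := by
  have h1 : HasDerivAt (fun t : ℝ => f (t • x)) (fderiv ℝ f x x) 1 := by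
    have hi : HasDerivAt (fun t : ℝ => t • x) x 1 := by
      simpa using (hasDerivAt_id (1:ℝ)).smul_const x
    have := (one_smul ℝ x) ▸ hdf.hasFDerivAt
    exact (this.comp_hasDerivAt 1 hi).congr_deriv (by simp)
  have h2 : HasDerivAt (fun t : ℝ => t ^ m * f x) (m * f x) 1 := by
    simpa using (Real.hasDerivAt_rpow_const (x := (1:ℝ)) (p := m)
      (Or.inl one_ne_zero)).mul_const (f x)
  have heq : (fun t : ℝ => f (t • x)) =ᶠ[nhds 1] (fun t : ℝ => t ^ m * f x) := by
    filter_upwards [eventually_gt_nhds (by norm_num : (0:ℝ) < 1)] with t ht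
    exact hhom t ht x hx
  exact (h1.congr_of_eventuallyEq heq.symm).unique h2

private lemma grad_aux {n : ℕ} {f : (Fin n → ℝ) → ℝ} {Γ : Set (Fin n → ℝ)}
    (hconv : ConvexOn ℝ Γ f) {x y : Fin n → ℝ} (hx : x ∈ Γ) (hy : y ∈ Γ)
    (hdf : DifferentiableAt ℝ f x) :
    f x + fderiv ℝ f x (y - x) ≤ f y := by
  set A : ℝ →ᵃ[ℝ] (Fin n → ℝ) := AffineMap.lineMap x y with hA
  have hk : ConvexOn ℝ (A ⁻¹' Γ) (f ∘ A) := hconv.comp_affineMap A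
  have hA0 : A 0 = x := AffineMap.lineMap_apply_zero x y
  have hA1 : A 1 = y := AffineMap.lineMap_apply_one x y
  have hd : HasDerivAt (fun t : ℝ => f (A t)) (fderiv ℝ f x (y - x)) 0 := by
    have hi : HasDerivAt (fun t : ℝ => A t) (y - x) 0 := by
      simp only [hA, AffineMap.lineMap_apply]
      simpa using ((hasDerivAt_id (0:ℝ)).smul_const (y - x)).add_const x
    have hf' : HasFDerivAt f (fderiv ℝ f x) (A 0) := hA0 ▸ hdf.hasFDerivAt
    exact (hf'.comp_hasDerivAt 0 hi).congr_deriv (by simp)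
  have h01 : (0:ℝ) < 1 := one_pos
  have := hk.le_slope_of_hasDerivAt (x := 0) (y := 1)
    (by simp [Set.mem_preimage, hA0, hx]) (by simp [Set.mem_preimage, hA1, hy]) h01 hd
  have hslope : slope (f ∘ A) 0 1 = f y - f x := by
    simp [slope, hA0, hA1]
  rw [hslope] at this
  linarith

private lemma sym_aux {n : ℕ} {f : (Fin n → ℝ) → ℝ} {Γ : Set (Fin n → ℝ)} (hΓo : IsOpen Γ)
    (hsym : ∀ (σ : Equiv.Perm (Fin n)), ∀ x ∈ Γ, f (x ∘ σ) = f x)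
    {s : ℝ} (hc : (fun _ : Fin n => s) ∈ Γ)
    (hdf : DifferentiableAt ℝ f (fun _ => s)) (i j : Fin n) :
    fderiv ℝ f (fun _ => s) (Pi.single i 1) = fderiv ℝ f (fun _ => s) (Pi.single j 1) := by
  set c : Fin n → ℝ := fun _ => s with hc'
  set σ := Equiv.swap i j with hσ
  set P : (Fin n → ℝ) →L[ℝ] (Fin n → ℝ) := ContinuousLinearMap.pi
    (fun k => ContinuousLinearMap.proj (σ k)) with hP
  have hPapp : ∀ v : Fin n → ℝ, P v = v ∘ σ := fun v => rfl
  have hPc : P c = c := rfl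
  have heq : (fun x => f (P x)) =ᶠ[nhds c] f := by
    filter_upwards [hΓo.mem_nhds hc] with x hx
    exact hsym σ x hx
  have h1 : fderiv ℝ (fun x => f (P x)) c = (fderiv ℝ f c).comp P := by
    have := fderiv_comp (𝕜 := ℝ) c (hPc ▸ hdf) P.differentiableAt
    rw [Function.comp_def] at this
    rw [this, P.fderiv, hPc]
  have h2 : fderiv ℝ f c = (fderiv ℝ f c).comp P := by
    rw [← h1]; exact (heq.fderiv_eq).symm
  have h3 := congrArg (fun L => L (Pi.single j 1)) h2
  simp only [ContinuousLinearMap.comp_apply] at h3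
  have h4 : P (Pi.single j 1) = Pi.single i 1 := by
    rw [hPapp]
    ext k
    simp only [Function.comp_apply]
    rcases eq_or_ne k i with rfl | hk
    · rw [hσ, Equiv.swap_apply_left]; simp
    · have hne : σ k ≠ j := by
        rw [hσ]
        intro h
        apply hk
        have : k = (Equiv.swap i j).symm j := (Equiv.eq_symm_apply _).mpr h
        simpa [Equiv.symm_swap, Equiv.swap_apply_right] using this
      simp [Pi.single_eq_of_ne hk, Pi.single_eq_of_ne hne]
  rw [h4] at h3
  exact h3.symm ▸ rfl

/-- second inequality of Lemma 2.3, convex/concave case. -/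
theorem lemma23_second_ineq_convex_concave (n : ℕ) (m : ℝ) (hm : m ≠ 0)
    (f g : (Fin n → ℝ) → ℝ)
    (Γ : Set (Fin n → ℝ)) (hΓ : Γ = {x : Fin n → ℝ | ∀ i, 0 < x i})
    (hsymf : ∀ (σ : Equiv.Perm (Fin n)), ∀ x ∈ Γ, f (x ∘ σ) = f x)
    (hsymg : ∀ (σ : Equiv.Perm (Fin n)), ∀ x ∈ Γ, g (x ∘ σ) = g x)
    (hdf : ∀ x ∈ Γ, DifferentiableAt ℝ f x)
    (hdg : ∀ x ∈ Γ, DifferentiableAt ℝ g x)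
    (hhomf : ∀ t : ℝ, 0 < t → ∀ x ∈ Γ, f (t • x) = t ^ m * f x)
    (hhomg : ∀ t : ℝ, 0 < t → ∀ x ∈ Γ, g (t • x) = t ^ m * g x)
    (hellf : ∀ x ∈ Γ, ∀ i, 0 < fderiv ℝ f x (Pi.single i 1))
    (hellg : ∀ x ∈ Γ, ∀ i, 0 < fderiv ℝ g x (Pi.single i 1))
    (hconvf : ConvexOn ℝ Γ f) (hconcg : ConcaveOn ℝ Γ g) :
    ∀ x ∈ Γ,
      0 ≤ m * ∑ j, (f x * fderiv ℝ g x (Pi.single j 1)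
                  - g x * fderiv ℝ f x (Pi.single j 1)) := by
  intro a ha
  rcases Nat.eq_zero_or_pos n with hn | hn
  · subst hn; simp
  haveI : Nonempty (Fin n) := Fin.pos_iff_nonempty.mp hn
  have hΓo : IsOpen Γ := by
    rw [hΓ]
    have : {x : Fin n → ℝ | ∀ i, 0 < x i} = ⋂ i, (fun x : Fin n → ℝ => x i) ⁻¹' Set.Ioi 0 := by
      ext x; simp
    rw [this]
    exact isOpen_iInter_of_finite fun i => (isOpen_Ioi).preimage (continuous_apply i)
  have hapos : ∀ i, 0 < a i := by rw [hΓ] at ha; exact ha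
  -- the all-ones vector
  set e : Fin n → ℝ := fun _ => 1 with he'
  have he : e ∈ Γ := by rw [hΓ]; intro i; norm_num
  -- average
  set s : ℝ := (∑ i, a i) / n with hs'
  have hsumpos : 0 < ∑ i, a i := Finset.sum_pos (fun i _ => hapos i) Finset.univ_nonempty
  have hnpos : (0:ℝ) < n := Nat.cast_pos.mpr hn
  have hs : 0 < s := div_pos hsumpos hnpos
  set c : Fin n → ℝ := fun _ => s with hc'
  have hce : c = s • e := by ext k; simp [he', hc']
  have hcΓ : c ∈ Γ := by rw [hΓ]; intro i; exact hs
  -- concave g gives convex -g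
  have hconvg : ConvexOn ℝ Γ (-g) := hconcg.neg
  have gradg : ∀ x ∈ Γ, ∀ y ∈ Γ, g y ≤ g x + fderiv ℝ g x (y - x) := by
    intro x hx y hy
    have := grad_aux hconvg hx hy (hdg x hx).neg
    have hng : fderiv ℝ (-g) x = -(fderiv ℝ g x) := fderiv_neg (f := g)
    rw [hng] at this
    simp only [Pi.neg_apply, ContinuousLinearMap.neg_apply] at this
    linarith
  -- Euler relations
  have hEfa : fderiv ℝ f a a = m * f a := euler_aux hhomf ha (hdf a ha)
  have hEga : fderiv ℝ g a a = m * g a := euler_aux hhomg ha (hdg a ha)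
  have hEfe : fderiv ℝ f e e = m * f e := euler_aux hhomf he (hdf e he)
  have hEge : fderiv ℝ g e e = m * g e := euler_aux hhomg he (hdg e he)
  -- positivity of m * f etc.
  have hmfa : 0 < m * f a := by
    rw [← hEfa, sum_aux]
    exact Finset.sum_pos (fun i _ => mul_pos (hapos i) (hellf a ha i)) Finset.univ_nonempty
  have hmga : 0 < m * g a := by
    rw [← hEga, sum_aux]
    exact Finset.sum_pos (fun i _ => mul_pos (hapos i) (hellg a ha i)) Finset.univ_nonempty
  have hmfe : 0 < m * f e := by
    rw [← hEfe, sum_aux]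
    exact Finset.sum_pos (fun i _ => mul_pos one_pos (hellf e he i)) Finset.univ_nonempty
  have hmge : 0 < m * g e := by
    rw [← hEge, sum_aux]
    exact Finset.sum_pos (fun i _ => mul_pos one_pos (hellg e he i)) Finset.univ_nonempty
  -- sums of partials
  set Sf : ℝ := ∑ j, fderiv ℝ f a (Pi.single j 1) with hSf'
  set Sg : ℝ := ∑ j, fderiv ℝ g a (Pi.single j 1) with hSg'
  have hfae : fderiv ℝ f a e = Sf := by rw [sum_aux]; simp [he', hSf']
  have hgae : fderiv ℝ g a e = Sg := by rw [sum_aux]; simp [he', hSg']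
  -- step 1: compare gradient sums at a with values at e
  have step1 : Sf ≤ f e + (m - 1) * f a := by
    have := grad_aux hconvf ha he (hdf a ha)
    rw [map_sub, hfae, hEfa] at this
    linarith
  have step1g : g e + (m - 1) * g a ≤ Sg := by
    have := gradg a ha e he
    rw [map_sub, hgae, hEga] at this
    linarith
  -- step 2: compare values at a with values at c = s • e
  have hfc : f c = s ^ m * f e := by rw [hce]; exact hhomf s hs e he
  have hgc : g c = s ^ m * g e := by rw [hce]; exact hhomg s hs e he
  have hzero : ∀ h : (Fin n → ℝ) → ℝ,
      (∀ (σ : Equiv.Perm (Fin n)), ∀ x ∈ Γ, h (x ∘ σ) = h x) →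
      DifferentiableAt ℝ h c → fderiv ℝ h c (a - c) = 0 := by
    intro h hsym hdh
    set i0 : Fin n := Classical.arbitrary (Fin n) with hi0
    have heqp : ∀ i, fderiv ℝ h c (Pi.single i 1) = fderiv ℝ h c (Pi.single i0 1) :=
      fun i => sym_aux hΓo hsym hcΓ hdh i i0
    rw [sum_aux]
    have : ∀ i : Fin n, (a - c) i * fderiv ℝ h c (Pi.single i 1)
        = (a i - s) * fderiv ℝ h c (Pi.single i0 1) := by
      intro i; rw [heqp i]; simp [hc']
    rw [Finset.sum_congr rfl (fun i _ => this i), ← Finset.sum_mul]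
    have hsum : ∑ i, (a i - s) = 0 := by
      rw [Finset.sum_sub_distrib, Finset.sum_const, Finset.card_univ, Fintype.card_fin,
        nsmul_eq_mul, hs']
      field_simp
      ring
    rw [hsum, zero_mul]
  have step2 : s ^ m * f e ≤ f a := by
    have := grad_aux hconvf hcΓ ha (hdf c hcΓ)
    rw [hzero f hsymf (hdf c hcΓ), hfc] at this
    linarith
  have step2g : g a ≤ s ^ m * g e := by
    have := gradg c hcΓ a ha
    rw [hzero g hsymg (hdg c hcΓ), hgc] at this
    linarith
  -- assemble
  have hgoal : ∑ j, (f a * fderiv ℝ g a (Pi.single j 1) - g a * fderiv ℝ f a (Pi.single j 1))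
      = f a * Sg - g a * Sf := by
    rw [Finset.sum_sub_distrib, ← Finset.mul_sum, ← Finset.mul_sum]
  rw [hgoal]
  have A1 : (m * f a) * (g e + (m - 1) * g a) ≤ (m * f a) * Sg :=
    mul_le_mul_of_nonneg_left step1g hmfa.le
  have A2 : (m * g a) * Sf ≤ (m * g a) * (f e + (m - 1) * f a) :=
    mul_le_mul_of_nonneg_left step1 hmga.le
  have B1 : (s ^ m * f e) * (m * g e) ≤ f a * (m * g e) :=
    mul_le_mul_of_nonneg_right step2 hmge.le
  have B2 : g a * (m * f e) ≤ (s ^ m * g e) * (m * f e) :=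
    mul_le_mul_of_nonneg_right step2g hmfe.le
  nlinarith [A1, A2, B1, B2]
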